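/- Let b ≤ N and let P_1, ..., P_b be polynomials of degree less than N whose images span the quotient space Π_N / Π_{N-b}. Let B be b linear functionals on polynomials such that the matrix with columns B(x^0), ..., B(x^{b-1}) is invertible. Then for any polynomial f of degree less than N and any g ∈ ℝ^b, there exist a unique polynomial u of degree less than N and unique scalars τ_1, ..., τ_b such that ∂^b u + Σ_k τ_k P_k = f and B(u) = g. -/
import Mathlib

open Polynomial

private lemma derivMem {k : ℕ} {q : ℝ[X]} (h : q ∈ degreeLT ℝ k) :
    derivative q ∈ degreeLT ℝ (k - 1) := by
  rw [mem_degreeLT] at h ⊢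
  by_cases hq : q.natDegree = 0
  · rw [derivative_of_natDegree_zero hq]
    exact lt_of_eq_of_lt degree_zero (WithBot.bot_lt_coe _)
  · have h1 := degree_derivative_eq q (Nat.pos_of_ne_zero hq)
    have hq0 : q ≠ 0 := fun h0 => hq (by simp [h0])
    rw [degree_eq_natDegree hq0, Nat.cast_lt] at h
    rw [h1, Nat.cast_lt]
    omega

private lemma iterDerivMem {n : ℕ} (m : ℕ) {q : ℝ[X]} (h : q ∈ degreeLT ℝ n) :
    derivative^[m] q ∈ degreeLT ℝ (n - m) := by
  induction m with
  | zero => simpa using h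
  | succ m ih =>
    rw [Function.iterate_succ_apply']
    have := derivMem ih
    rwa [Nat.sub_sub] at this

private lemma memOfIterDerivZero {m : ℕ} {q : ℝ[X]} (h : derivative^[m] q = 0) :
    q ∈ degreeLT ℝ m := by
  induction m generalizing q with
  | zero => simp only [Function.iterate_zero_apply] at h; rw [h]; exact Submodule.zero_mem _
  | succ m ih =>
    rw [Function.iterate_succ_apply] at h
    have h1 := ih h
    rw [mem_degreeLT] at h1 ⊢
    by_cases hq : q.natDegree = 0
    · exact lt_of_le_of_lt degree_le_natDegree (by rw [hq]; exact_mod_cast Nat.succ_pos m)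
    · have h2 := degree_derivative_eq q (Nat.pos_of_ne_zero hq)
      rw [h2, Nat.cast_lt] at h1
      exact lt_of_le_of_lt degree_le_natDegree (Nat.cast_lt.2 (by omega))

private lemma finrankDegreeLT (n : ℕ) : Module.finrank ℝ (degreeLT ℝ n) = n := by
  rw [(degreeLTEquiv ℝ n).finrank_eq]; simp

private lemma repDegreeLT {b : ℕ} {u : ℝ[X]} (hu : u ∈ degreeLT ℝ b) :
    u = ∑ j : Fin b, u.coeff j • X ^ (j : ℕ) := by
  by_cases hu0 : u = 0
  · simp [hu0]
  · rw [mem_degreeLT, degree_eq_natDegree hu0, Nat.cast_lt] at hu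
    conv_lhs => rw [u.as_sum_range' b hu]
    rw [← Fin.sum_univ_eq_sum_range (fun i => monomial i (u.coeff i)) b]
    exact Finset.sum_congr rfl fun j _ => (smul_X_eq_monomial).symm

/-- **Lemma 2.2.** For `∂^b u + Σ τ_k P_k = f` where the tau polynomials `P_k ∈ Π_N`
span the quotient `Π_N / Π_{N-b}`, and the boundary matrix on monomials is invertible,
there is a unique solution `(u, τ)` with `u ∈ Π_N`. -/
theorem tau_diff_same_order
    (b N : ℕ) (hb : 0 < b) (hbN : b ≤ N)
    (P : Fin b → ℝ[X]) (hPmem : ∀ k, P k ∈ Polynomial.degreeLT ℝ N)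
    (hPspan :
      Submodule.span ℝ
        (Set.range fun k : Fin b =>
          (Polynomial.degreeLT ℝ (N - b)).mkQ (P k)) =
      Submodule.map (Polynomial.degreeLT ℝ (N - b)).mkQ (Polynomial.degreeLT ℝ N))
    (B : ℝ[X] →ₗ[ℝ] (Fin b → ℝ))
    (hB : (Matrix.of fun i j : Fin b => B (Polynomial.X ^ (j : ℕ)) i).det ≠ 0)
    (f : ℝ[X]) (hf : f ∈ Polynomial.degreeLT ℝ N)
    (g : Fin b → ℝ) :
    ∃! w : ℝ[X] × (Fin b → ℝ),
      w.1 ∈ Polynomial.degreeLT ℝ N ∧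
      Polynomial.derivative^[b] w.1 + ∑ k, w.2 k • P k = f ∧
      B w.1 = g := by
  classical
  haveI : Module.Finite ℝ (degreeLT ℝ N : Submodule ℝ ℝ[X]) :=
    Module.Finite.equiv (degreeLTEquiv ℝ N).symm
  set π := (degreeLT ℝ (N - b)).mkQ with hπdef
  set V : Submodule ℝ ℝ[X] := degreeLT ℝ N with hVdef
  -- linear independence of the images of the P's in the quotient
  have hliP : LinearIndependent ℝ (fun k : Fin b => π (P k)) := by
    set W : Submodule ℝ _ := Submodule.map π V with hWdef
    have hVmem : ∀ k, π (P k) ∈ W := fun k => Submodule.mem_map_of_mem (hPmem k)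
    set v : Fin b → W := fun k => ⟨π (P k), hVmem k⟩ with hvdef
    have hker : LinearMap.ker (π ∘ₗ V.subtype)
        = Submodule.comap V.subtype (degreeLT ℝ (N - b)) := by
      rw [hπdef, LinearMap.ker_comp, Submodule.ker_mkQ]
    have hrange : LinearMap.range (π ∘ₗ V.subtype) = W := by
      rw [LinearMap.range_comp, Submodule.range_subtype]
    have hfk : Module.finrank ℝ (LinearMap.ker (π ∘ₗ V.subtype)) = N - b := by
      have e : Submodule.comap V.subtype (degreeLT ℝ (N - b)) ≃ₗ[ℝ] degreeLT ℝ (N - b) :=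
        Submodule.comapSubtypeEquivOfLe (degreeLT_mono (Nat.sub_le N b))
      rw [hker, e.finrank_eq]
      exact finrankDegreeLT _
    have hfW : Module.finrank ℝ W = b := by
      have h := LinearMap.finrank_range_add_finrank_ker (π ∘ₗ V.subtype)
      rw [hrange, hfk] at h
      have hfV : Module.finrank ℝ V = N := finrankDegreeLT N
      rw [hfV] at h
      omega
    have hspan2 : ⊤ ≤ Submodule.span ℝ (Set.range v) := by
      have hmapping : Submodule.map W.subtype (Submodule.span ℝ (Set.range v)) =
          Submodule.map W.subtype ⊤ := by
        rw [Submodule.map_span, Submodule.map_top, Submodule.range_subtype, ← Set.range_comp]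
        exact hPspan
      exact (Submodule.map_injective_of_injective (Submodule.injective_subtype W) hmapping).ge
    have hli_v : LinearIndependent ℝ v :=
      linearIndependent_of_top_le_span_of_card_eq_finrank hspan2 (by simp [hfW])
    exact hli_v.map' W.subtype (Submodule.ker_subtype W)
  -- the boundary map kills only 0 on degreeLT b
  have hMinj : Function.Injective
      (Matrix.of fun i j : Fin b => B (X ^ (j : ℕ)) i).mulVec :=
    Matrix.mulVec_injective_iff_isUnit.2
      ((Matrix.isUnit_iff_isUnit_det _).2 (isUnit_iff_ne_zero.2 hB))
  have huzero : ∀ u : ℝ[X], u ∈ degreeLT ℝ b → B u = 0 → u = 0 := by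
    intro u hu hBu
    have hrepu := repDegreeLT hu
    have hBsum : B u = ∑ j : Fin b, u.coeff j • B (X ^ (j : ℕ)) := by
      conv_lhs => rw [hrepu]
      simp [map_sum, map_smul]
    have hMv : (Matrix.of fun i j : Fin b => B (X ^ (j : ℕ)) i).mulVec
        (fun j : Fin b => u.coeff j) = 0 := by
      have heqB : (Matrix.of fun i j : Fin b => B (X ^ (j : ℕ)) i).mulVec
          (fun j : Fin b => u.coeff j) = B u := by
        funext i
        rw [hBsum]
        simp [Matrix.mulVec, dotProduct, Finset.sum_apply, mul_comm]
      rw [heqB, hBu]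
    have hc : (fun j : Fin b => u.coeff j) = 0 := by
      apply hMinj
      rw [hMv, Matrix.mulVec_zero]
    rw [hrepu]
    refine Finset.sum_eq_zero fun j _ => ?_
    have : u.coeff j = 0 := congrFun hc j
    rw [this, zero_smul]
  -- set up the linear endomorphism T
  let D : ℝ[X] →ₗ[ℝ] ℝ[X] := (Polynomial.derivative : ℝ[X] →ₗ[ℝ] ℝ[X]) ^ b
  have hD : ∀ p : ℝ[X], D p = derivative^[b] p := fun p => Module.End.pow_apply _ _ _
  let S : (Fin b → ℝ) →ₗ[ℝ] ℝ[X] := ∑ k : Fin b, (LinearMap.proj k).smulRight (P k)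
  have hS : ∀ τ : Fin b → ℝ, S τ = ∑ k, τ k • P k := by
    intro τ; simp [S, LinearMap.sum_apply]
  let A1 : (V × (Fin b → ℝ)) →ₗ[ℝ] ℝ[X] :=
    D ∘ₗ V.subtype ∘ₗ LinearMap.fst ℝ V (Fin b → ℝ) + S ∘ₗ LinearMap.snd ℝ V (Fin b → ℝ)
  have hA1 : ∀ w : V × (Fin b → ℝ),
      A1 w = derivative^[b] (w.1 : ℝ[X]) + ∑ k, w.2 k • P k := by
    intro w; simp [A1, hD, hS]
  have hA1mem : ∀ w : V × (Fin b → ℝ), A1 w ∈ V := by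
    intro w
    rw [hA1]
    refine Submodule.add_mem _ ?_
      (Submodule.sum_mem _ fun k _ => Submodule.smul_mem _ _ (hPmem k))
    exact degreeLT_mono (Nat.sub_le N b) (iterDerivMem b w.1.2)
  let T : (V × (Fin b → ℝ)) →ₗ[ℝ] (V × (Fin b → ℝ)) :=
    (LinearMap.codRestrict V A1 hA1mem).prod
      ((B ∘ₗ V.subtype) ∘ₗ LinearMap.fst ℝ V (Fin b → ℝ))
  have hT1 : ∀ w : V × (Fin b → ℝ),
      ((T w).1 : ℝ[X]) = derivative^[b] (w.1 : ℝ[X]) + ∑ k, w.2 k • P k := by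
    intro w
    show (A1 w : ℝ[X]) = _
    exact hA1 w
  have hT2 : ∀ w : V × (Fin b → ℝ), (T w).2 = B (w.1 : ℝ[X]) := fun w => rfl
  -- T is injective
  have hTinj : Function.Injective T := by
    rw [← LinearMap.ker_eq_bot, LinearMap.ker_eq_bot']
    rintro ⟨u, τ⟩ hw
    have h1 : derivative^[b] (u : ℝ[X]) + ∑ k, τ k • P k = 0 := by
      have := congrArg (fun z : V × (Fin b → ℝ) => (z.1 : ℝ[X])) hw
      simpa [hT1 (u, τ)] using this
    have h2 : B (u : ℝ[X]) = 0 := by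
      have := congrArg Prod.snd hw
      simpa [hT2 (u, τ)] using this
    have hq : ∑ k, τ k • π (P k) = 0 := by
      have h3 := congrArg π h1
      rw [map_add, map_sum] at h3
      simp only [map_smul] at h3
      have hz : π (derivative^[b] (u : ℝ[X])) = 0 := by
        rw [hπdef, Submodule.mkQ_apply, Submodule.Quotient.mk_eq_zero]
        exact iterDerivMem b u.2
      rw [hz, zero_add, map_zero] at h3
      exact h3
    have hτ : τ = 0 := funext (Fintype.linearIndependent_iff.1 hliP τ hq)
    have hdu : derivative^[b] (u : ℝ[X]) = 0 := by
      rw [hτ] at h1; simpa using h1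
    have hu0 : (u : ℝ[X]) = 0 := huzero _ (memOfIterDerivZero hdu) h2
    refine Prod.ext ?_ hτ
    exact Subtype.ext hu0
  -- T is surjective, get the solution
  have hTsurj : Function.Surjective T := LinearMap.injective_iff_surjective.mp hTinj
  obtain ⟨w0, hw0⟩ := hTsurj (⟨f, hf⟩, g)
  refine ⟨((w0.1 : ℝ[X]), w0.2), ⟨w0.1.2, ?_, ?_⟩, ?_⟩
  · have := congrArg (fun z : V × (Fin b → ℝ) => (z.1 : ℝ[X])) hw0
    simpa [hT1 w0] using this
  · have := congrArg Prod.snd hw0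
    simpa [hT2 w0] using this
  · rintro ⟨u', τ'⟩ ⟨hu'mem, heq, hBu'⟩
    have hTw' : T (⟨u', hu'mem⟩, τ') = (⟨f, hf⟩, g) := by
      refine Prod.ext (Subtype.ext ?_) ?_
      · rw [hT1 (⟨u', hu'mem⟩, τ')]
        exact heq
      · rw [hT2 (⟨u', hu'mem⟩, τ')]
        exact hBu'
    have hEq : (⟨u', hu'mem⟩, τ') = w0 := hTinj (hTw'.trans hw0.symm)
    have h1 : u' = (w0.1 : ℝ[X]) :=
      congrArg (fun z : V × (Fin b → ℝ) => (z.1 : ℝ[X])) hEq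
    have h2 : τ' = w0.2 := congrArg Prod.snd hEq
    exact Prod.ext h1 h2
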